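/- arXiv:0704.0755 — 3 statements merged into one kernel-verified Lean document; each statement's English description precedes it below -/
import Mathlib

section
/- Let R be a commutative ring, n a natural number, and A an n×n matrix over R. Suppose the characteristic polynomial of A factors as p = X^d · g for some natural number d and some polynomial g over R (so d is at most the lowest degree of p). Then for every natural number k with k ≥ d, the sum over m from 0 to n − d of (coefficient of x^m in g) • A^(k+m) is the zero matrix; i.e., for k ≥ d the powers of A satisfy a linear recurrence of order n − d. -/
theorem stmt_2 (R : Type*) [CommRing R] (n : ℕ) (A : Matrix (Fin n) (Fin n) R)
    (d : ℕ) (g : Polynomial R)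
    (h : Matrix.charpoly A = Polynomial.X ^ d * g) :
    ∀ k : ℕ, d ≤ k →
      ∑ m ∈ Finset.range (n - d + 1), g.coeff m • A ^ (k + m) = 0 := by
  intro k hk
  rcases subsingleton_or_nontrivial R with hR | hR
  · exact Subsingleton.elim _ _
  -- coeffs of g vanish above n - d
  have hcoeff : ∀ m, n - d < m → g.coeff m = 0 := by
    intro m hm
    have hp : (Matrix.charpoly A).coeff (m + d) = 0 := by
      apply Polynomial.coeff_eq_zero_of_natDegree_lt
      rw [Matrix.charpoly_natDegree_eq_dim, Fintype.card_fin]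
      omega
    rwa [h, Polynomial.coeff_X_pow_mul] at hp
  have hdeg : g.natDegree ≤ n - d :=
    Polynomial.natDegree_le_iff_coeff_eq_zero.mpr hcoeff
  -- Cayley-Hamilton
  have hCH : A ^ d * Polynomial.aeval A g = 0 := by
    have := Matrix.aeval_self_charpoly A
    rw [h, map_mul, map_pow, Polynomial.aeval_X] at this
    exact this
  have key : A ^ k * Polynomial.aeval A g = 0 := by
    calc A ^ k * Polynomial.aeval A g = A ^ (k - d) * (A ^ d * Polynomial.aeval A g) := by
          rw [← mul_assoc, ← pow_add, Nat.sub_add_cancel hk]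
      _ = 0 := by rw [hCH, mul_zero]
  have hsum : Polynomial.aeval A g
      = ∑ m ∈ Finset.range (n - d + 1), g.coeff m • A ^ m := by
    rw [Polynomial.aeval_eq_sum_range' (n := n - d + 1) (by omega)]
  calc ∑ m ∈ Finset.range (n - d + 1), g.coeff m • A ^ (k + m)
      = A ^ k * ∑ m ∈ Finset.range (n - d + 1), g.coeff m • A ^ m := by
        rw [Finset.mul_sum]
        refine Finset.sum_congr rfl fun m _ => ?_
        rw [mul_smul_comm, ← pow_add]
    _ = 0 := by rw [← hsum, key]
end

section
/- Let A be the 3×3 integer matrix with rows (4, −2, 2), (−5, 7, −5), (−6, 6, −4). Then for every natural number k, A^k equals the matrix with rows (−2^k + 2·3^k, 2^(k+1) − 2·3^k, −2^(k+1) + 2·3^k), (−5·3^k + 5·2^k, 5·3^k − 4·2^k, −5·3^k + 5·2^k), (6·2^k − 6·3^k, −6·2^k + 6·3^k, −6·3^k + 7·2^k). -/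
theorem stmt_4 (k : ℕ) :
    (!![4, -2, 2; -5, 7, -5; -6, 6, -4] : Matrix (Fin 3) (Fin 3) ℤ) ^ k =
      !![-(2 : ℤ) ^ k + 2 * 3 ^ k, 2 ^ (k + 1) - 2 * 3 ^ k, -(2 : ℤ) ^ (k + 1) + 2 * 3 ^ k;
         -5 * 3 ^ k + 5 * 2 ^ k, 5 * 3 ^ k - 4 * 2 ^ k, -5 * 3 ^ k + 5 * 2 ^ k;
         6 * 2 ^ k - 6 * 3 ^ k, -6 * 2 ^ k + 6 * 3 ^ k, -6 * 3 ^ k + 7 * 2 ^ k] := by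
  induction k with
  | zero =>
    simp only [pow_zero]; norm_num; exact Matrix.one_fin_three
  | succ n ih =>
    rw [pow_succ, ih]
    ext i j
    fin_cases i <;> fin_cases j <;>
      simp [Matrix.mul_apply, Fin.sum_univ_succ, pow_succ] <;> ring
end

section
/- Let A be the 5×5 real matrix with rows (0,0,1,0,1), (1,0,0,0,1), (0,0,0,1,1), (0,1,0,0,1), (1,1,1,1,0). Then for every natural number k, the (1,5) entry of A^k (using 1-based indexing of rows and columns) equals −(√17/17)·(1/2 − √17/2)^k + (√17/17)·(1/2 + √17/2)^k. -/
theorem stmt_7 (k : ℕ) :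
    ((!![0,0,1,0,1; 1,0,0,0,1; 0,0,0,1,1; 0,1,0,0,1; 1,1,1,1,0] :
        Matrix (Fin 5) (Fin 5) ℝ) ^ k) 0 4 =
      -(Real.sqrt 17 / 17) * (1 / 2 - Real.sqrt 17 / 2) ^ k +
        (Real.sqrt 17 / 17) * (1 / 2 + Real.sqrt 17 / 2) ^ k := by
  set A : Matrix (Fin 5) (Fin 5) ℝ :=
    !![0,0,1,0,1; 1,0,0,0,1; 0,0,0,1,1; 0,1,0,0,1; 1,1,1,1,0] with hA
  set s : ℝ := Real.sqrt 17 with hsdef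
  have hs : s ^ 2 = 17 := Real.sq_sqrt (by norm_num)
  set f : ℕ → ℝ := fun k => -(s / 17) * (1 / 2 - s / 2) ^ k + (s / 17) * (1 / 2 + s / 2) ^ k with hf
  set g : ℕ → ℝ := fun k => (1 / 2 + s / 34) * (1 / 2 - s / 2) ^ k + (1 / 2 - s / 34) * (1 / 2 + s / 2) ^ k with hg
  have key : ∀ k : ℕ, (A ^ k) 0 4 = f k ∧ (A ^ k) 1 4 = f k ∧ (A ^ k) 2 4 = f k ∧
      (A ^ k) 3 4 = f k ∧ (A ^ k) 4 4 = g k := by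
    intro k
    induction k with
    | zero =>
      refine ⟨?_, ?_, ?_, ?_, ?_⟩ <;> simp [hf, hg, Matrix.one_apply] <;> ring
    | succ n ih =>
      obtain ⟨h0, h1, h2, h3, h4⟩ := ih
      have hp : A ^ (n + 1) = A * A ^ n := by rw [pow_succ']
      rw [hp]
      refine ⟨?_, ?_, ?_, ?_, ?_⟩ <;>
      · simp only [Matrix.mul_apply, Fin.sum_univ_five, h0, h1, h2, h3, h4]
        simp [Matrix.mul_apply, Fin.sum_univ_five, h0, h1, h2, h3, h4, hf, hg, hA]
        first
        | linear_combination (-((1 / 2 - s / 2) ^ n + (1 / 2 + s / 2) ^ n) / 34) * hs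
        | linear_combination (((1 / 2 - s / 2) ^ n + (1 / 2 + s / 2) ^ n) / 68) * hs
  exact (key k).1
end
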